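/- Let T = α₁ ∪ α₂ ∪ α₃ be the abstract tripod (three unit segments glued at a common point o). Let S be the subcomplex of T³ consisting of the union over all triples (i,j,k) ∈ {1,2,3}³ of the triangles σ_ijk = {(x,y,z) ∈ αᵢ × αⱼ × α_k : x + y + z = 1} (identifying each leg with [0,1], with o at 0). Then S is homeomorphic to the link of (o,o,o) in T³, and for any pair of distinct indices i ≠ j, the subcomplex S ∩ (αᵢ ∪ αⱼ)³ is homeomorphic to the 2-sphere. -/

import Mathlib

open Set

/-- The three legs of the tripod `T`, embedded in `ℝ²`: three unit segments
emanating from the origin `o = (0,0)` (identified with `[0,1]`, `o` at `0`). -/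
def leg : Fin 3 → Set (ℝ × ℝ) :=
  ![{p | p.2 = 0 ∧ 0 ≤ p.1 ∧ p.1 ≤ 1},
    {p | p.1 = 0 ∧ 0 ≤ p.2 ∧ p.2 ≤ 1},
    {p | p.1 = p.2 ∧ -1 ≤ p.1 ∧ p.1 ≤ 0}]

/-- The tripod `T = α₁ ∪ α₂ ∪ α₃`. -/
def tripod : Set (ℝ × ℝ) := leg 0 ∪ leg 1 ∪ leg 2

/-- The leg coordinate of a point of `T`: its distance to the center along its leg. -/
def ell (p : ℝ × ℝ) : ℝ := max |p.1| |p.2|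

/-- The complex `S ⊂ T³`: the union of the triangles
`σ_ijk = {(x,y,z) ∈ αᵢ × αⱼ × α_k : x + y + z = 1}` (leg coordinates). -/
def Scomplex : Set ((ℝ × ℝ) × (ℝ × ℝ) × (ℝ × ℝ)) :=
  {p | p.1 ∈ tripod ∧ p.2.1 ∈ tripod ∧ p.2.2 ∈ tripod ∧
    ell p.1 + ell p.2.1 + ell p.2.2 = 1}

/-- The link of `(o,o,o)` in the cube complex `T³`, realized as the set of
points of `T³` at `ℓ∞`-radius `1` from the center. -/
def linkOfCenter : Set ((ℝ × ℝ) × (ℝ × ℝ) × (ℝ × ℝ)) :=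
  {p | p.1 ∈ tripod ∧ p.2.1 ∈ tripod ∧ p.2.2 ∈ tripod ∧
    max (max (ell p.1) (ell p.2.1)) (ell p.2.2) = 1}

/-! ### Basic lemmas about `leg`, `ell`, `tripod` -/

lemma leg0_def : leg 0 = {p | p.2 = 0 ∧ 0 ≤ p.1 ∧ p.1 ≤ 1} := rfl
lemma leg1_def : leg 1 = {p | p.1 = 0 ∧ 0 ≤ p.2 ∧ p.2 ≤ 1} := rfl
lemma leg2_def : leg 2 = {p | p.1 = p.2 ∧ -1 ≤ p.1 ∧ p.1 ≤ 0} := rfl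

lemma ell_nonneg (p : ℝ × ℝ) : 0 ≤ ell p := le_max_of_le_left (abs_nonneg _)

lemma ell_continuous : Continuous ell := (continuous_fst.abs).max (continuous_snd.abs)

lemma ell_smul (s : ℝ) (hs : 0 ≤ s) (p : ℝ × ℝ) : ell (s • p) = s * ell p := by
  simp only [ell, Prod.smul_fst, Prod.smul_snd, smul_eq_mul, abs_mul, abs_of_nonneg hs]
  exact (mul_max_of_nonneg _ _ hs).symm

lemma ell_leg0 {p : ℝ × ℝ} (h : p ∈ leg 0) : ell p = p.1 := by
  rw [leg0_def] at h; unfold ell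
  rw [h.1, abs_zero, abs_of_nonneg h.2.1]; exact max_eq_left h.2.1

lemma ell_leg1 {p : ℝ × ℝ} (h : p ∈ leg 1) : ell p = p.2 := by
  rw [leg1_def] at h; unfold ell
  rw [h.1, abs_zero, abs_of_nonneg h.2.1]; exact max_eq_right h.2.1

lemma ell_leg2 {p : ℝ × ℝ} (h : p ∈ leg 2) : ell p = -p.1 := by
  rw [leg2_def] at h; unfold ell
  rw [← h.1, abs_of_nonpos h.2.2, max_self]

lemma mem_tripod_smul {p : ℝ × ℝ} (hp : p ∈ tripod) {s : ℝ} (hs : 0 ≤ s)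
    (h1 : s * ell p ≤ 1) : s • p ∈ tripod := by
  rcases hp with (h | h) | h
  · rw [ell_leg0 h] at h1
    rw [leg0_def] at h
    exact Or.inl (Or.inl (by
      rw [leg0_def]
      exact ⟨by simp [h.1], by simpa using mul_nonneg hs h.2.1, by simpa using h1⟩))
  · rw [ell_leg1 h] at h1
    rw [leg1_def] at h
    exact Or.inl (Or.inr (by
      rw [leg1_def]
      exact ⟨by simp [h.1], by simpa using mul_nonneg hs h.2.1, by simpa using h1⟩))
  · rw [ell_leg2 h] at h1
    rw [leg2_def] at h
    refine Or.inr ?_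
    rw [leg2_def]
    refine ⟨by simp [h.1], ?_, ?_⟩ <;>
      simp only [Prod.smul_fst, smul_eq_mul, mem_setOf_eq] <;> nlinarith [h.2.1, h.2.2]

lemma leg0_compact : IsCompact (leg 0) := by
  have h0 : leg 0 = (fun t : ℝ => ((t, 0) : ℝ × ℝ)) '' Icc 0 1 := by
    ext ⟨x, y⟩
    rw [leg0_def]
    constructor
    · rintro ⟨h1, h2, h3⟩
      exact ⟨x, ⟨h2, h3⟩, Prod.ext rfl h1.symm⟩
    · rintro ⟨t, ht, hxy⟩
      obtain ⟨rfl, rfl⟩ := Prod.mk.injEq .. ▸ hxy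
      exact ⟨rfl, ht.1, ht.2⟩
  rw [h0]
  exact isCompact_Icc.image (continuous_id.prodMk continuous_const)

lemma leg1_compact : IsCompact (leg 1) := by
  have h1 : leg 1 = (fun t : ℝ => ((0, t) : ℝ × ℝ)) '' Icc 0 1 := by
    ext ⟨x, y⟩
    rw [leg1_def]
    constructor
    · rintro ⟨h1, h2, h3⟩
      exact ⟨y, ⟨h2, h3⟩, Prod.ext h1.symm rfl⟩
    · rintro ⟨t, ht, hxy⟩
      obtain ⟨rfl, rfl⟩ := Prod.mk.injEq .. ▸ hxy
      exact ⟨rfl, ht.1, ht.2⟩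
  rw [h1]
  exact isCompact_Icc.image (continuous_const.prodMk continuous_id)

lemma leg2_compact : IsCompact (leg 2) := by
  have h2 : leg 2 = (fun t : ℝ => ((t, t) : ℝ × ℝ)) '' Icc (-1) 0 := by
    ext ⟨x, y⟩
    rw [leg2_def]
    constructor
    · rintro ⟨h1, h2, h3⟩
      exact ⟨x, ⟨h2, h3⟩, Prod.ext rfl h1⟩
    · rintro ⟨t, ht, hxy⟩
      obtain ⟨rfl, rfl⟩ := Prod.mk.injEq .. ▸ hxy
      exact ⟨rfl, ht.1, ht.2⟩
  rw [h2]
  exact isCompact_Icc.image (continuous_id.prodMk continuous_id)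

lemma leg0_subset_tripod : leg 0 ⊆ tripod := fun _ h => Or.inl (Or.inl h)
lemma leg1_subset_tripod : leg 1 ⊆ tripod := fun _ h => Or.inl (Or.inr h)
lemma leg2_subset_tripod : leg 2 ⊆ tripod := fun _ h => Or.inr h

noncomputable section

/-! ### Part 1: the radial homeomorphism `S ≃ₜ link` -/

def Mfun (p : (ℝ × ℝ) × (ℝ × ℝ) × (ℝ × ℝ)) : ℝ :=
  max (max (ell p.1) (ell p.2.1)) (ell p.2.2)

def Sfun (p : (ℝ × ℝ) × (ℝ × ℝ) × (ℝ × ℝ)) : ℝ :=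
  ell p.1 + ell p.2.1 + ell p.2.2

lemma Mfun_pos_of_S {p} (hp : p ∈ Scomplex) : 0 < Mfun p := by
  obtain ⟨-, -, -, h⟩ := hp
  by_contra hM
  push_neg at hM
  have h1 := le_trans (le_max_left _ _) (le_trans (le_max_left _ _) hM : max (ell p.1) (ell p.2.1) ≤ 0)
  have h2 := le_trans (le_max_right _ _) (le_trans (le_max_left _ _) hM : max (ell p.1) (ell p.2.1) ≤ 0)
  have h3 := le_trans (le_max_right _ _) hM
  nlinarith [ell_nonneg p.1, ell_nonneg p.2.1, ell_nonneg p.2.2]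

lemma Sfun_pos_of_link {p} (hp : p ∈ linkOfCenter) : 0 < Sfun p := by
  obtain ⟨-, -, -, h⟩ := hp
  have h1 : ell p.1 ≤ Sfun p := by
    unfold Sfun; nlinarith [ell_nonneg p.2.1, ell_nonneg p.2.2]
  have h2 : ell p.2.1 ≤ Sfun p := by
    unfold Sfun; nlinarith [ell_nonneg p.1, ell_nonneg p.2.2]
  have h3 : ell p.2.2 ≤ Sfun p := by
    unfold Sfun; nlinarith [ell_nonneg p.1, ell_nonneg p.2.1]
  have : Mfun p ≤ Sfun p := by unfold Mfun; exact max_le (max_le h1 h2) h3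
  calc (0:ℝ) < 1 := one_pos
  _ = Mfun p := (h).symm
  _ ≤ Sfun p := this

lemma smul_comps (s : ℝ) (p : (ℝ × ℝ) × (ℝ × ℝ) × (ℝ × ℝ)) :
    (s • p).1 = s • p.1 ∧ (s • p).2.1 = s • p.2.1 ∧ (s • p).2.2 = s • p.2.2 :=
  ⟨rfl, rfl, rfl⟩

lemma fwd_mem {p} (hp : p ∈ Scomplex) : (Mfun p)⁻¹ • p ∈ linkOfCenter := by
  obtain ⟨h1, h2, h3, h4⟩ := hp
  have hM := Mfun_pos_of_S ⟨h1, h2, h3, h4⟩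
  have hMinv : (0:ℝ) ≤ (Mfun p)⁻¹ := le_of_lt (inv_pos.mpr hM)
  have key : ∀ q : ℝ × ℝ, ell q ≤ Mfun p → (Mfun p)⁻¹ * ell q ≤ 1 := fun q hq => by
    rw [inv_mul_le_iff₀ hM]; simpa using hq
  refine ⟨mem_tripod_smul h1 hMinv (key _ (le_trans (le_max_left _ _) (le_max_left _ _))),
    mem_tripod_smul h2 hMinv (key _ (le_trans (le_max_right _ _) (le_max_left _ _))),
    mem_tripod_smul h3 hMinv (key _ (le_max_right _ _)), ?_⟩
  show max (max (ell ((Mfun p)⁻¹ • p).1) _) _ = 1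
  rw [(smul_comps _ p).1, (smul_comps _ p).2.1, (smul_comps _ p).2.2,
    ell_smul _ hMinv, ell_smul _ hMinv, ell_smul _ hMinv,
    ← mul_max_of_nonneg _ _ hMinv, ← mul_max_of_nonneg _ _ hMinv]
  exact inv_mul_cancel₀ (ne_of_gt hM)

lemma bwd_mem {p} (hp : p ∈ linkOfCenter) : (Sfun p)⁻¹ • p ∈ Scomplex := by
  obtain ⟨h1, h2, h3, h4⟩ := hp
  have hS := Sfun_pos_of_link ⟨h1, h2, h3, h4⟩
  have hSinv : (0:ℝ) ≤ (Sfun p)⁻¹ := le_of_lt (inv_pos.mpr hS)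
  have key : ∀ q : ℝ × ℝ, ell q ≤ Sfun p → (Sfun p)⁻¹ * ell q ≤ 1 := fun q hq => by
    rw [inv_mul_le_iff₀ hS]; simpa using hq
  have e1 : ell p.1 ≤ Sfun p := by
    unfold Sfun; nlinarith [ell_nonneg p.2.1, ell_nonneg p.2.2]
  have e2 : ell p.2.1 ≤ Sfun p := by
    unfold Sfun; nlinarith [ell_nonneg p.1, ell_nonneg p.2.2]
  have e3 : ell p.2.2 ≤ Sfun p := by
    unfold Sfun; nlinarith [ell_nonneg p.1, ell_nonneg p.2.1]
  refine ⟨mem_tripod_smul h1 hSinv (key _ e1), mem_tripod_smul h2 hSinv (key _ e2),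
    mem_tripod_smul h3 hSinv (key _ e3), ?_⟩
  show ell ((Sfun p)⁻¹ • p).1 + _ + _ = 1
  rw [(smul_comps _ p).1, (smul_comps _ p).2.1, (smul_comps _ p).2.2,
    ell_smul _ hSinv, ell_smul _ hSinv, ell_smul _ hSinv, ← mul_add, ← mul_add]
  exact inv_mul_cancel₀ (ne_of_gt hS)

lemma Mfun_smul (s : ℝ) (hs : 0 ≤ s) (p) : Mfun (s • p) = s * Mfun p := by
  unfold Mfun
  rw [(smul_comps _ p).1, (smul_comps _ p).2.1, (smul_comps _ p).2.2,
    ell_smul _ hs, ell_smul _ hs, ell_smul _ hs,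
    ← mul_max_of_nonneg _ _ hs, ← mul_max_of_nonneg _ _ hs]

lemma Sfun_smul (s : ℝ) (hs : 0 ≤ s) (p) : Sfun (s • p) = s * Sfun p := by
  unfold Sfun
  rw [(smul_comps _ p).1, (smul_comps _ p).2.1, (smul_comps _ p).2.2,
    ell_smul _ hs, ell_smul _ hs, ell_smul _ hs, mul_add, mul_add]

def part1Homeo : Scomplex ≃ₜ linkOfCenter where
  toFun p := ⟨(Mfun p.1)⁻¹ • p.1, fwd_mem p.2⟩
  invFun p := ⟨(Sfun p.1)⁻¹ • p.1, bwd_mem p.2⟩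
  left_inv p := by
    ext1
    have hM := Mfun_pos_of_S p.2
    have hS : Sfun p.1 = 1 := p.2.2.2.2
    show (Sfun ((Mfun p.1)⁻¹ • p.1))⁻¹ • (Mfun p.1)⁻¹ • p.1 = p.1
    rw [Sfun_smul _ (le_of_lt (inv_pos.mpr hM)) p.1, hS, mul_one, inv_inv, smul_smul,
      mul_inv_cancel₀ (ne_of_gt hM), one_smul]
  right_inv p := by
    ext1
    have hS := Sfun_pos_of_link p.2
    have hM : Mfun p.1 = 1 := p.2.2.2.2
    show (Mfun ((Sfun p.1)⁻¹ • p.1))⁻¹ • (Sfun p.1)⁻¹ • p.1 = p.1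
    rw [Mfun_smul _ (le_of_lt (inv_pos.mpr hS)) p.1, hM, mul_one, inv_inv, smul_smul,
      mul_inv_cancel₀ (ne_of_gt hS), one_smul]
  continuous_toFun := by
    apply Continuous.subtype_mk
    have hM : Continuous fun p : Scomplex => Mfun p.1 :=
      (((ell_continuous.comp continuous_fst).max
        (ell_continuous.comp (continuous_fst.comp continuous_snd))).max
        (ell_continuous.comp (continuous_snd.comp continuous_snd))).comp continuous_subtype_val
    exact (hM.inv₀ fun p => ne_of_gt (Mfun_pos_of_S p.2)).smul continuous_subtype_val
  continuous_invFun := by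
    apply Continuous.subtype_mk
    have hS : Continuous fun p : linkOfCenter => Sfun p.1 :=
      (((ell_continuous.comp continuous_fst).add
        (ell_continuous.comp (continuous_fst.comp continuous_snd))).add
        (ell_continuous.comp (continuous_snd.comp continuous_snd))).comp continuous_subtype_val
    exact (hS.inv₀ fun p => ne_of_gt (Sfun_pos_of_link p.2)).smul continuous_subtype_val

/-! ### Part 2: the general pair lemma -/

lemma pairHomeo (A : Set (ℝ × ℝ)) (φ : ℝ × ℝ → ℝ) (ψ : ℝ → ℝ × ℝ)
    (hφc : Continuous φ)
    (hA : IsCompact A)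
    (hAt : A ⊆ tripod)
    (hφ : ∀ p ∈ A, |φ p| = ell p)
    (hψφ : ∀ p ∈ A, ψ (φ p) = p)
    (hψA : ∀ t : ℝ, |t| ≤ 1 → ψ t ∈ A)
    (hφψ : ∀ t : ℝ, |t| ≤ 1 → φ (ψ t) = t) :
    Nonempty
      (({p : (ℝ × ℝ) × (ℝ × ℝ) × (ℝ × ℝ) | p ∈ Scomplex ∧
          p.1 ∈ A ∧ p.2.1 ∈ A ∧ p.2.2 ∈ A} : Set _) ≃ₜ
        Metric.sphere (0 : EuclideanSpace ℝ (Fin 3)) 1) := by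
  set K : Set ((ℝ × ℝ) × (ℝ × ℝ) × (ℝ × ℝ)) :=
    {p | p ∈ Scomplex ∧ p.1 ∈ A ∧ p.2.1 ∈ A ∧ p.2.2 ∈ A} with hK
  have hKeq : K = (A ×ˢ (A ×ˢ A)) ∩ {p | ell p.1 + ell p.2.1 + ell p.2.2 = 1} := by
    ext p
    constructor
    · rintro ⟨⟨-, -, -, hs⟩, h1, h2, h3⟩
      exact ⟨⟨h1, h2, h3⟩, hs⟩
    · rintro ⟨⟨h1, h2, h3⟩, hs⟩
      exact ⟨⟨hAt h1, hAt h2, hAt h3, hs⟩, h1, h2, h3⟩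
  have hcontSum : Continuous fun p : (ℝ × ℝ) × (ℝ × ℝ) × (ℝ × ℝ) =>
      ell p.1 + ell p.2.1 + ell p.2.2 :=
    ((ell_continuous.comp continuous_fst).add
      (ell_continuous.comp (continuous_fst.comp continuous_snd))).add
      (ell_continuous.comp (continuous_snd.comp continuous_snd))
  have hKcomp : IsCompact K := by
    rw [hKeq]
    exact (hA.prod (hA.prod hA)).inter_right (isClosed_eq hcontSum continuous_const)
  haveI : CompactSpace K := isCompact_iff_compactSpace.mp hKcomp
  set v : K → EuclideanSpace ℝ (Fin 3) :=
    fun p => WithLp.toLp 2 ![φ p.1.1, φ p.1.2.1, φ p.1.2.2] with hv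
  have happ : ∀ p : K, v p 0 = φ p.1.1 ∧ v p 1 = φ p.1.2.1 ∧ v p 2 = φ p.1.2.2 :=
    fun p => ⟨rfl, rfl, rfl⟩
  have hL : ∀ p : K, |v p 0| + |v p 1| + |v p 2| = 1 := by
    rintro ⟨p, ⟨⟨-, -, -, hs⟩, h1, h2, h3⟩⟩
    show |φ p.1| + |φ p.2.1| + |φ p.2.2| = 1
    rw [hφ _ h1, hφ _ h2, hφ _ h3]; exact hs
  have hvne : ∀ p : K, v p ≠ 0 := by
    intro p h0
    have := hL p
    rw [h0] at this
    simp at this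
  have hnorm : ∀ p : K, ‖v p‖ ≠ 0 := fun p => norm_ne_zero_iff.mpr (hvne p)
  have hvcont : Continuous v := by
    have hw : Continuous fun p : K => (![φ p.1.1, φ p.1.2.1, φ p.1.2.2] : Fin 3 → ℝ) := by
      refine continuous_pi fun k => ?_
      fin_cases k
      · exact hφc.comp (continuous_fst.comp continuous_subtype_val)
      · exact hφc.comp ((continuous_fst.comp continuous_snd).comp continuous_subtype_val)
      · exact hφc.comp ((continuous_snd.comp continuous_snd).comp continuous_subtype_val)
    exact ((PiLp.continuousLinearEquiv 2 ℝ (fun _ : Fin 3 => ℝ)).symm.continuous).comp hw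
  set F : K → EuclideanSpace ℝ (Fin 3) := fun p => (‖v p‖)⁻¹ • v p with hF
  have hFsphere : ∀ p : K, F p ∈ Metric.sphere (0 : EuclideanSpace ℝ (Fin 3)) 1 := by
    intro p
    rw [mem_sphere_zero_iff_norm, hF, norm_smul, norm_inv, norm_norm]
    exact inv_mul_cancel₀ (hnorm p)
  have hFcont : Continuous fun p : K =>
      (⟨F p, hFsphere p⟩ : Metric.sphere (0 : EuclideanSpace ℝ (Fin 3)) 1) :=
    Continuous.subtype_mk ((hvcont.norm.inv₀ hnorm).smul hvcont) _
  have hinj : Function.Injective fun p : K =>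
      (⟨F p, hFsphere p⟩ : Metric.sphere (0 : EuclideanSpace ℝ (Fin 3)) 1) := by
    intro p q h
    have h' : F p = F q := congrArg Subtype.val h
    have hvpq : v p = v q := by
      have hb : (0:ℝ) < ‖v q‖ := lt_of_le_of_ne (norm_nonneg _) (Ne.symm (hnorm q))
      have ha : (0:ℝ) < ‖v p‖ := lt_of_le_of_ne (norm_nonneg _) (Ne.symm (hnorm p))
      obtain ⟨c, hcpos, hvc⟩ : ∃ c : ℝ, 0 < c ∧ v p = c • v q := by
        refine ⟨‖v p‖ * ‖v q‖⁻¹, mul_pos ha (inv_pos.mpr hb), ?_⟩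
        have h2 := congrArg (fun u => ‖v p‖ • u) h'
        simpa [hF, smul_smul, mul_inv_cancel₀ (hnorm p)] using h2
      have h1 := hL p
      have h2 := hL q
      have e0 : v p 0 = c * v q 0 := by rw [hvc]; rfl
      have e1 : v p 1 = c * v q 1 := by rw [hvc]; rfl
      have e2 : v p 2 = c * v q 2 := by rw [hvc]; rfl
      rw [e0, e1, e2, abs_mul, abs_mul, abs_mul, abs_of_pos hcpos] at h1
      have hc1 : c = 1 := by nlinarith
      rw [hvc, hc1, one_smul]
    obtain ⟨-, hp1, hp2, hp3⟩ := p.2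
    obtain ⟨-, hq1, hq2, hq3⟩ := q.2
    have g0 : φ p.1.1 = φ q.1.1 := by
      rw [← (happ p).1, ← (happ q).1, hvpq]
    have g1 : φ p.1.2.1 = φ q.1.2.1 := by
      rw [← (happ p).2.1, ← (happ q).2.1, hvpq]
    have g2 : φ p.1.2.2 = φ q.1.2.2 := by
      rw [← (happ p).2.2, ← (happ q).2.2, hvpq]
    apply Subtype.ext
    refine Prod.ext ?_ (Prod.ext ?_ ?_)
    · rw [← hψφ _ hp1, ← hψφ _ hq1, g0]
    · rw [← hψφ _ hp2, ← hψφ _ hq2, g1]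
    · rw [← hψφ _ hp3, ← hψφ _ hq3, g2]
  have hsurj : Function.Surjective fun p : K =>
      (⟨F p, hFsphere p⟩ : Metric.sphere (0 : EuclideanSpace ℝ (Fin 3)) 1) := by
    rintro ⟨u, hu⟩
    rw [mem_sphere_zero_iff_norm] at hu
    have hune : u ≠ 0 := by
      intro h; rw [h, norm_zero] at hu; exact one_ne_zero hu.symm
    have hsnn : (0:ℝ) ≤ |u 0| + |u 1| + |u 2| := by positivity
    have hspos : 0 < |u 0| + |u 1| + |u 2| := by
      rcases lt_or_eq_of_le hsnn with h | h
      · exact h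
      · exfalso
        apply hune
        have a0 := abs_nonneg (u 0); have a1 := abs_nonneg (u 1); have a2 := abs_nonneg (u 2)
        have h0 : u 0 = 0 := abs_eq_zero.mp (by linarith)
        have h1 : u 1 = 0 := abs_eq_zero.mp (by linarith)
        have h2 : u 2 = 0 := abs_eq_zero.mp (by linarith)
        ext k
        fin_cases k
        · exact h0
        · exact h1
        · exact h2
    set s : ℝ := |u 0| + |u 1| + |u 2| with hs
    have hb0 : |u 0 / s| ≤ 1 := by
      rw [abs_div, abs_of_pos hspos, div_le_one hspos]
      nlinarith [abs_nonneg (u 1), abs_nonneg (u 2)]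
    have hb1 : |u 1 / s| ≤ 1 := by
      rw [abs_div, abs_of_pos hspos, div_le_one hspos]
      nlinarith [abs_nonneg (u 0), abs_nonneg (u 2)]
    have hb2 : |u 2 / s| ≤ 1 := by
      rw [abs_div, abs_of_pos hspos, div_le_one hspos]
      nlinarith [abs_nonneg (u 0), abs_nonneg (u 1)]
    have hm1 := hψA _ hb0
    have hm2 := hψA _ hb1
    have hm3 := hψA _ hb2
    have hell0 : ell (ψ (u 0 / s)) = |u 0| / s := by
      rw [← hφ _ hm1, hφψ _ hb0, abs_div, abs_of_pos hspos]
    have hell1 : ell (ψ (u 1 / s)) = |u 1| / s := by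
      rw [← hφ _ hm2, hφψ _ hb1, abs_div, abs_of_pos hspos]
    have hell2 : ell (ψ (u 2 / s)) = |u 2| / s := by
      rw [← hφ _ hm3, hφψ _ hb2, abs_div, abs_of_pos hspos]
    have hsum : ell (ψ (u 0 / s)) + ell (ψ (u 1 / s)) + ell (ψ (u 2 / s)) = 1 := by
      rw [hell0, hell1, hell2]
      field_simp
      exact hs.symm
    have hpK : (ψ (u 0 / s), ψ (u 1 / s), ψ (u 2 / s)) ∈ K :=
      ⟨⟨hAt hm1, hAt hm2, hAt hm3, hsum⟩, hm1, hm2, hm3⟩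
    refine ⟨⟨_, hpK⟩, Subtype.ext ?_⟩
    have hveq : v ⟨_, hpK⟩ = s⁻¹ • u := by
      ext k
      fin_cases k
      · show φ (ψ (u 0 / s)) = s⁻¹ * u 0
        rw [hφψ _ hb0]; ring
      · show φ (ψ (u 1 / s)) = s⁻¹ * u 1
        rw [hφψ _ hb1]; ring
      · show φ (ψ (u 2 / s)) = s⁻¹ * u 2
        rw [hφψ _ hb2]; ring
    show (‖v ⟨_, hpK⟩‖)⁻¹ • v ⟨_, hpK⟩ = u
    rw [hveq, norm_smul, hu, mul_one, norm_inv, Real.norm_eq_abs, abs_of_pos hspos,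
      inv_inv, smul_smul, mul_inv_cancel₀ (ne_of_gt hspos), one_smul]
  exact ⟨Continuous.homeoOfEquivCompactToT2
    (f := Equiv.ofBijective _ ⟨hinj, hsurj⟩) hFcont⟩

/-! ### The three pairs -/

lemma homeo01 :
    Nonempty
      (({p : (ℝ × ℝ) × (ℝ × ℝ) × (ℝ × ℝ) | p ∈ Scomplex ∧
          p.1 ∈ leg 0 ∪ leg 1 ∧ p.2.1 ∈ leg 0 ∪ leg 1 ∧ p.2.2 ∈ leg 0 ∪ leg 1} : Set _) ≃ₜ
        Metric.sphere (0 : EuclideanSpace ℝ (Fin 3)) 1) := by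
  apply pairHomeo (leg 0 ∪ leg 1) (fun p => p.1 - p.2)
    (fun t => (max t 0, max (-t) 0))
  · exact continuous_fst.sub continuous_snd
  · exact leg0_compact.union leg1_compact
  · exact union_subset leg0_subset_tripod leg1_subset_tripod
  · rintro p (h | h)
    · rw [ell_leg0 h]; rw [leg0_def] at h
      rw [h.1, sub_zero, abs_of_nonneg h.2.1]
    · rw [ell_leg1 h]; rw [leg1_def] at h
      rw [h.1, zero_sub, abs_neg, abs_of_nonneg h.2.1]
  · rintro p (h | h)
    · rw [leg0_def] at h
      obtain ⟨h1, h2, h3⟩ := h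
      refine Prod.ext ?_ ?_
      · show max (p.1 - p.2) 0 = p.1
        rw [h1, sub_zero]; exact max_eq_left h2
      · show max (-(p.1 - p.2)) 0 = p.2
        rw [h1, sub_zero]; exact max_eq_right (neg_nonpos.mpr h2)
    · rw [leg1_def] at h
      obtain ⟨h1, h2, h3⟩ := h
      refine Prod.ext ?_ ?_
      · show max (p.1 - p.2) 0 = p.1
        rw [h1, zero_sub]; exact max_eq_right (neg_nonpos.mpr h2)
      · show max (-(p.1 - p.2)) 0 = p.2
        rw [h1, zero_sub, neg_neg]; exact max_eq_left h2
  · intro t ht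
    rcases le_total 0 t with h | h
    · left
      rw [leg0_def]
      exact ⟨max_eq_right (neg_nonpos.mpr h), le_max_right _ _,
        max_le (le_trans (le_abs_self t) ht) zero_le_one⟩
    · right
      rw [leg1_def]
      exact ⟨max_eq_right h, le_max_right _ _,
        max_le (le_trans (neg_le_abs t) ht) zero_le_one⟩
  · intro t ht
    show max t 0 - max (-t) 0 = t
    rcases le_total 0 t with h | h
    · rw [max_eq_left h, max_eq_right (neg_nonpos.mpr h), sub_zero]
    · rw [max_eq_right h, max_eq_left (neg_nonneg.mpr h), zero_sub, neg_neg]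

lemma homeo02 :
    Nonempty
      (({p : (ℝ × ℝ) × (ℝ × ℝ) × (ℝ × ℝ) | p ∈ Scomplex ∧
          p.1 ∈ leg 0 ∪ leg 2 ∧ p.2.1 ∈ leg 0 ∪ leg 2 ∧ p.2.2 ∈ leg 0 ∪ leg 2} : Set _) ≃ₜ
        Metric.sphere (0 : EuclideanSpace ℝ (Fin 3)) 1) := by
  apply pairHomeo (leg 0 ∪ leg 2) (fun p => p.1) (fun t => (t, min t 0))
  · exact continuous_fst
  · exact leg0_compact.union leg2_compact
  · exact union_subset leg0_subset_tripod leg2_subset_tripod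
  · rintro p (h | h)
    · rw [ell_leg0 h]; rw [leg0_def] at h
      exact abs_of_nonneg h.2.1
    · rw [ell_leg2 h]; rw [leg2_def] at h
      exact abs_of_nonpos h.2.2
  · rintro p (h | h)
    · rw [leg0_def] at h
      obtain ⟨h1, h2, h3⟩ := h
      exact Prod.ext rfl (by show min p.1 0 = p.2; rw [h1]; exact min_eq_right h2)
    · rw [leg2_def] at h
      obtain ⟨h1, h2, h3⟩ := h
      exact Prod.ext rfl (by show min p.1 0 = p.2; rw [← h1]; exact min_eq_left h3)
  · intro t ht
    rcases le_total 0 t with h | h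
    · left
      rw [leg0_def]
      exact ⟨min_eq_right h, h, le_trans (le_abs_self t) ht⟩
    · right
      rw [leg2_def]
      refine ⟨(min_eq_left h).symm, ?_, h⟩
      have := le_trans (neg_le_abs t) ht
      linarith
  · intro t _
    rfl

lemma homeo12 :
    Nonempty
      (({p : (ℝ × ℝ) × (ℝ × ℝ) × (ℝ × ℝ) | p ∈ Scomplex ∧
          p.1 ∈ leg 1 ∪ leg 2 ∧ p.2.1 ∈ leg 1 ∪ leg 2 ∧ p.2.2 ∈ leg 1 ∪ leg 2} : Set _) ≃ₜ
        Metric.sphere (0 : EuclideanSpace ℝ (Fin 3)) 1) := by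
  apply pairHomeo (leg 1 ∪ leg 2) (fun p => p.2) (fun t => (min t 0, t))
  · exact continuous_snd
  · exact leg1_compact.union leg2_compact
  · exact union_subset leg1_subset_tripod leg2_subset_tripod
  · rintro p (h | h)
    · rw [ell_leg1 h]; rw [leg1_def] at h
      exact abs_of_nonneg h.2.1
    · rw [ell_leg2 h]
      rw [leg2_def] at h
      rw [← h.1]
      exact abs_of_nonpos h.2.2
  · rintro p (h | h)
    · rw [leg1_def] at h
      obtain ⟨h1, h2, h3⟩ := h
      exact Prod.ext (by show min p.2 0 = p.1; rw [h1]; exact min_eq_right h2) rfl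
    · rw [leg2_def] at h
      obtain ⟨h1, h2, h3⟩ := h
      refine Prod.ext (by show min p.2 0 = p.1; rw [← h1]; exact min_eq_left h3) rfl
  · intro t ht
    rcases le_total 0 t with h | h
    · left
      rw [leg1_def]
      exact ⟨min_eq_right h, h, le_trans (le_abs_self t) ht⟩
    · right
      rw [leg2_def]
      refine ⟨min_eq_left h, ?_, le_trans (min_le_right _ _) le_rfl⟩
      · rw [min_eq_left h]
        have := le_trans (neg_le_abs t) ht
        linarith
  · intro t _
    rfl

lemma homeo10 :
    Nonempty
      (({p : (ℝ × ℝ) × (ℝ × ℝ) × (ℝ × ℝ) | p ∈ Scomplex ∧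
          p.1 ∈ leg 1 ∪ leg 0 ∧ p.2.1 ∈ leg 1 ∪ leg 0 ∧ p.2.2 ∈ leg 1 ∪ leg 0} : Set _) ≃ₜ
        Metric.sphere (0 : EuclideanSpace ℝ (Fin 3)) 1) := by
  rw [union_comm (leg 1) (leg 0)]
  exact homeo01

lemma homeo20 :
    Nonempty
      (({p : (ℝ × ℝ) × (ℝ × ℝ) × (ℝ × ℝ) | p ∈ Scomplex ∧
          p.1 ∈ leg 2 ∪ leg 0 ∧ p.2.1 ∈ leg 2 ∪ leg 0 ∧ p.2.2 ∈ leg 2 ∪ leg 0} : Set _) ≃ₜ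
        Metric.sphere (0 : EuclideanSpace ℝ (Fin 3)) 1) := by
  rw [union_comm (leg 2) (leg 0)]
  exact homeo02

lemma homeo21 :
    Nonempty
      (({p : (ℝ × ℝ) × (ℝ × ℝ) × (ℝ × ℝ) | p ∈ Scomplex ∧
          p.1 ∈ leg 2 ∪ leg 1 ∧ p.2.1 ∈ leg 2 ∪ leg 1 ∧ p.2.2 ∈ leg 2 ∪ leg 1} : Set _) ≃ₜ
        Metric.sphere (0 : EuclideanSpace ℝ (Fin 3)) 1) := by
  rw [union_comm (leg 2) (leg 1)]
  exact homeo12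

end

/-- `S` is homeomorphic to the link of `(o,o,o)` in `T³`, and for distinct legs
`i ≠ j` the subcomplex `S ∩ (αᵢ ∪ αⱼ)³` is homeomorphic to the 2-sphere. -/
theorem Scomplex_homeo_link_and_spheres :
    Nonempty (Scomplex ≃ₜ linkOfCenter) ∧
    ∀ i j : Fin 3, i ≠ j →
      Nonempty
        (({p : (ℝ × ℝ) × (ℝ × ℝ) × (ℝ × ℝ) | p ∈ Scomplex ∧
            p.1 ∈ leg i ∪ leg j ∧ p.2.1 ∈ leg i ∪ leg j ∧ p.2.2 ∈ leg i ∪ leg j} : Set _) ≃ₜ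
          Metric.sphere (0 : EuclideanSpace ℝ (Fin 3)) 1) := by
  refine ⟨⟨part1Homeo⟩, ?_⟩
  intro i j hij
  fin_cases i <;> fin_cases j <;>
    first
      | exact absurd rfl hij
      | exact homeo01
      | exact homeo02
      | exact homeo12
      | exact homeo10
      | exact homeo20
      | exact homeo21
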